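/- Let Λ be a finite alphabet and T a vector tree of infinite height. For every finite Souslin measurable coloring of W^∞(Λ,T), the set of all maps from ⊗T into Λ with the product topology, and every subspace Q of W^∞(Λ,T), there exists a further subspace Q' ≤ Q such that [Q']_Λ is monochromatic. -/

import Mathlib

set_option autoImplicit false

/-- A rooted, finitely branching, balanced tree of height `ω` with no maximal nodes,
modelled as a prefix-closed collection of finite sequences of natural numbers. -/
structure TreeT where
  mem : List ℕ → Prop
  root : mem []
  pref : ∀ s n, mem (s ++ [n]) → mem s
  finBranch : ∀ s, mem s → {n : ℕ | mem (s ++ [n])}.Finite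
  noMax : ∀ s, mem s → ∃ n, mem (s ++ [n])

variable {d : ℕ}

/-- Membership in the level product of a vector tree: all coordinates are nodes of the
respective trees and lie on a common level. -/
def InLP (V : Fin (d + 1) → TreeT) (t : Fin (d + 1) → List ℕ) : Prop :=
  (∀ i, (V i).mem (t i)) ∧ ∀ i, (t i).length = (t 0).length

/-- The level product `⊗T` of a vector tree. -/
def LP (V : Fin (d + 1) → TreeT) : Type :=
  {t : Fin (d + 1) → List ℕ // InLP V t}

/-- The level of an element of the level product. -/
def lev {V : Fin (d + 1) → TreeT} (t : LP V) : ℕ := (t.1 0).length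

/-- The coordinatewise (prefix) ordering on the level product. -/
def lpLE {V : Fin (d + 1) → TreeT} (t s : LP V) : Prop :=
  ∀ i, t.1 i <+: s.1 i

/-- The level set of a subset of the level product. -/
def levSet {V : Fin (d + 1) → TreeT} (A : Set (LP V)) : Set ℕ := lev '' A

/-- `t` is the minimum of `W` in the ordering of the level product. -/
def isMinOf {V : Fin (d + 1) → TreeT} (t : LP V) (W : Set (LP V)) : Prop :=
  t ∈ W ∧ ∀ s ∈ W, lpLE t s

/-- A vector subset `D` of the vector tree `V`: componentwise subsets of the trees with a
common level set. -/
structure VecSub {d : ℕ} (V : Fin (d + 1) → TreeT) where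
  sets : Fin (d + 1) → Set (List ℕ)
  mem : ∀ i, ∀ u ∈ sets i, (V i).mem u
  lvl : ∀ i j, {n : ℕ | ∃ u ∈ sets i, u.length = n} = {n : ℕ | ∃ u ∈ sets j, u.length = n}

variable {d : ℕ} {V : Fin (d + 1) → TreeT}

/-- The level set `L_T(D)` of a vector subset. -/
def VecSub.lvlSet (D : VecSub V) : Set ℕ := {n : ℕ | ∃ u ∈ D.sets 0, u.length = n}

/-- The increasing enumeration `ℓ₀ < ℓ₁ < ⋯` of the level set of `D`. -/
noncomputable def VecSub.L (D : VecSub V) (k : ℕ) : ℕ := Nat.nth (· ∈ D.lvlSet) k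

/-- `D` is a dense vector subset of `V`: its level set is infinite and, for every `k`,
`D` at level `ℓ_k` dominates the `k`-th level of `V` componentwise. -/
def VecSub.IsDense (D : VecSub V) : Prop :=
  D.lvlSet.Infinite ∧
  ∀ (k : ℕ) (i : Fin (d + 1)) (u : List ℕ), (V i).mem u → u.length = k →
    ∃ w ∈ D.sets i, w.length = D.L k ∧ u <+: w

/-- `D` is a `t`-dense vector subset: componentwise, `D_i ∩ suc_{T_i}(t_i)` is dense in
the tree `suc_{T_i}(t_i)` of successors of `t_i`. -/
def VecSub.IsTDense (D : VecSub V) (t : LP V) : Prop :=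
  ∀ i : Fin (d + 1),
    {n : ℕ | ∃ u ∈ D.sets i, t.1 i <+: u ∧ u.length = n}.Infinite ∧
    ∀ (k : ℕ) (u : List ℕ), (V i).mem u → t.1 i <+: u → u.length = (t.1 i).length + k →
      ∃ w ∈ D.sets i, t.1 i <+: w ∧
        w.length = Nat.nth (· ∈ {n : ℕ | ∃ u' ∈ D.sets i, t.1 i <+: u' ∧ u'.length = n}) k ∧
        u <+: w

/-- The level product `⊗D` of a vector subset, as a subset of `⊗T`. -/
def lprod (D : VecSub V) : Set (LP V) := {t | ∀ i, t.1 i ∈ D.sets i}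

/-- The restriction `D↾m` of `D` to its first `m` levels. -/
def VecSub.restr (D : VecSub V) (m : ℕ) : Fin (d + 1) → Set (List ℕ) :=
  fun i => {w ∈ D.sets i | ∃ k < m, w.length = D.L k}

/-- The part of `⊗D` lying on the first `m` levels of `D`. -/
def lprodUpto (D : VecSub V) (m : ℕ) : Set (LP V) :=
  {t ∈ lprod D | ∃ k < m, lev t = D.L k}

/-- The `n`-th level `⊗D(n)` of the level product of `D`. -/
def lprodAt (D : VecSub V) (n : ℕ) : Set (LP V) :=
  {t ∈ lprod D | lev t = D.L n}

/-- The Souslin operation applied to a Souslin scheme indexed by finite sequences of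
naturals. -/
def souslinOp {α : Type} (s : List ℕ → Set α) : Set α :=
  ⋃ σ : ℕ → ℕ, ⋂ n : ℕ, s ((List.range n).map σ)

/-- `A` is Souslin measurable with respect to the topology `τ`: it belongs to every
collection of sets that contains the open sets, is closed under complements and finite
unions (i.e. is an algebra), and is closed under the Souslin operation. -/
def SMeas {α : Type} (τ : TopologicalSpace α) (A : Set α) : Prop :=
  ∀ C : Set (Set α),
    (∀ U : Set α, τ.IsOpen U → U ∈ C) →
    (∀ B ∈ C, Bᶜ ∈ C) →
    (∀ B B' : Set α, B ∈ C → B' ∈ C → B ∪ B' ∈ C) →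
    (∀ s : List ℕ → Set α, (∀ l, s l ∈ C) → souslinOp s ∈ C) →
    A ∈ C

/-- A subspace `Q` of `W^∞(Λ,T)`: a map from `⊗T` into `Λ ∪ {v_t : t ∈ ⊗T}` together with
a dense vector subset `D` of `T` such that the variable `v_t` occurs iff `t ∈ ⊗D`, the
occurrence set of `v_t` is finite with minimum `t`, occurrence sets of variables at the
same level have the same level set, and occurrence sets of variables at strictly increasing
levels occupy strictly increasing blocks of levels. -/
structure InfSubspace (Λ : Type) {d : ℕ} (V : Fin (d + 1) → TreeT) where
  Q : LP V → Λ ⊕ LP V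
  D : VecSub V
  dense : D.IsDense
  varIff : ∀ t : LP V, (∃ x, Q x = Sum.inr t) ↔ t ∈ lprod D
  occFin : ∀ t ∈ lprod D, {x | Q x = Sum.inr t}.Finite
  occMin : ∀ t ∈ lprod D, Q t = Sum.inr t ∧ ∀ x, Q x = Sum.inr t → lpLE t x
  sameLev : ∀ t ∈ lprod D, ∀ t' ∈ lprod D, lev t = lev t' →
    levSet {x | Q x = Sum.inr t} = levSet {x | Q x = Sum.inr t'}
  incLev : ∀ t ∈ lprod D, ∀ t' ∈ lprod D, lev t < lev t' →
    ∀ x y, Q x = Sum.inr t → Q y = Sum.inr t' → lev x < lev y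

/-- The span `[Q]_Λ` of a subspace of `W^∞(Λ,T)`: all total maps `⊗T → Λ` obtained by
substituting letters for all the variables of `Q`. -/
def spanInf {Λ : Type} {d : ℕ} {V : Fin (d + 1) → TreeT} (Q : InfSubspace Λ V) :
    Set (LP V → Λ) :=
  {A | ∃ a : LP V → Λ, A = fun x => Sum.elim id a (Q.Q x)}

/-- The product topology on `W^∞(Λ,T)` coming from the discrete topology on `Λ`. -/
def infTop (Λ : Type) {d : ℕ} (V : Fin (d + 1) → TreeT) :
    TopologicalSpace (LP V → Λ) :=
  @Pi.topologicalSpace (LP V) (fun _ => Λ) (fun _ => ⊥)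


set_option maxHeartbeats 1000000

open Set Topology TopologicalSpace
open scoped symmDiff

section BP
variable {α : Type} [TopologicalSpace α]

/-- `s` has the Baire property. -/
def HasBP (s : Set α) : Prop := ∃ u : Set α, IsOpen u ∧ IsMeagre (s ∆ u)

lemma IsNowhereDense.isMeagre' {s : Set α} (h : IsNowhereDense s) : IsMeagre s := by
  rw [isMeagre_iff_countable_union_isNowhereDense]
  exact ⟨{s}, by simpa using h, countable_singleton s, by simp⟩

lemma isMeagre_sUnion {S : Set (Set α)} (hc : S.Countable) (h : ∀ s ∈ S, IsMeagre s) :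
    IsMeagre (⋃₀ S) := by
  rw [IsMeagre, compl_sUnion]
  rw [countable_sInter_mem (hc.image _)]
  rintro t ⟨s, hs, rfl⟩
  exact h s hs

lemma isMeagre_iUnion' {ι : Type*} [Countable ι] {s : ι → Set α}
    (h : ∀ i, IsMeagre (s i)) : IsMeagre (⋃ i, s i) := by
  rw [IsMeagre, compl_iUnion, countable_iInter_mem]
  exact h

lemma IsOpen.hasBP {s : Set α} (h : IsOpen s) : HasBP s :=
  ⟨s, h, by rw [symmDiff_self]; exact IsMeagre.empty⟩

lemma IsMeagre.hasBP {s : Set α} (h : IsMeagre s) : HasBP s :=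
  ⟨∅, isOpen_empty, by rw [show (∅ : Set α) = ⊥ from rfl, symmDiff_bot]; exact h⟩

lemma IsMeagre.union' {s t : Set α} (hs : IsMeagre s) (ht : IsMeagre t) :
    IsMeagre (s ∪ t) := by
  rw [IsMeagre, compl_union]
  exact Filter.inter_mem hs ht

lemma HasBP.of_symmDiff_meagre {s t : Set α} (ht : HasBP t) (hm : IsMeagre (s ∆ t)) :
    HasBP s := by
  obtain ⟨u, hu, hmu⟩ := ht
  exact ⟨u, hu, (hm.union' hmu).mono (symmDiff_triangle s t u)⟩

lemma IsClosed.hasBP {s : Set α} (h : IsClosed s) : HasBP s := by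
  refine ⟨interior s, isOpen_interior, ?_⟩
  have h1 : s ∆ interior s = frontier s := by
    rw [h.frontier_eq, symmDiff_def]
    have h2 : interior s \ s = ∅ := Set.diff_eq_empty.2 interior_subset
    show (s \ interior s) ∪ (interior s \ s) = _
    rw [h2, union_empty]
  rw [h1]
  have : IsNowhereDense (frontier s) := by
    rw [IsNowhereDense, isClosed_frontier.closure_eq]
    exact interior_frontier h
  exact this.isMeagre'

lemma HasBP.compl {s : Set α} (h : HasBP s) : HasBP sᶜ := by
  obtain ⟨u, hu, hm⟩ := h
  have h2 : IsMeagre (sᶜ ∆ uᶜ) := by rwa [compl_symmDiff_compl]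
  exact HasBP.of_symmDiff_meagre hu.isClosed_compl.hasBP h2

lemma hasBP_iUnion {ι : Type*} [Countable ι] {s : ι → Set α}
    (h : ∀ i, HasBP (s i)) : HasBP (⋃ i, s i) := by
  choose u hu hm using h
  refine ⟨⋃ i, u i, isOpen_iUnion hu, ?_⟩
  have hsub : ((⋃ i, s i) ∆ (⋃ i, u i)) ⊆ ⋃ i, (s i ∆ u i) := by
    intro x hx
    rw [Set.mem_symmDiff] at hx
    rcases hx with ⟨hx1, hx2⟩ | ⟨hx1, hx2⟩
    · obtain ⟨i, hi⟩ := mem_iUnion.1 hx1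
      exact mem_iUnion.2 ⟨i, Set.mem_symmDiff.2 (Or.inl ⟨hi, fun h' => hx2 (mem_iUnion.2 ⟨i, h'⟩)⟩)⟩
    · obtain ⟨i, hi⟩ := mem_iUnion.1 hx1
      exact mem_iUnion.2 ⟨i, Set.mem_symmDiff.2 (Or.inr ⟨hi, fun h' => hx2 (mem_iUnion.2 ⟨i, h'⟩)⟩)⟩
  exact (isMeagre_iUnion' hm).mono hsub

lemma hasBP_union {s t : Set α} (hs : HasBP s) (ht : HasBP t) : HasBP (s ∪ t) := by
  have h : s ∪ t = ⋃ b : Bool, (if b then s else t) := by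
    ext x; simp [Bool.exists_bool, or_comm]
  rw [h]
  exact hasBP_iUnion (by rintro (_|_) <;> simp [hs, ht])

lemma hasBP_iInter {ι : Type*} [Countable ι] {s : ι → Set α}
    (h : ∀ i, HasBP (s i)) : HasBP (⋂ i, s i) := by
  have h2 : (⋂ i, s i) = (⋃ i, (s i)ᶜ)ᶜ := by simp
  rw [h2]
  exact (hasBP_iUnion (fun i => (h i).compl)).compl

lemma isOpen_meagre_empty [BaireSpace α] {s : Set α} (ho : IsOpen s) (hm : IsMeagre s) :
    s = ∅ := by
  by_contra h
  obtain ⟨x, hx⟩ := Set.nonempty_iff_ne_empty.2 h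
  have hd : Dense sᶜ := dense_of_mem_residual hm
  obtain ⟨y, hy1, hy2⟩ := hd.inter_open_nonempty s ho ⟨x, hx⟩
  exact hy2 hy1

/-- Baire envelope. -/
lemma exists_envelope [SecondCountableTopology α] [BaireSpace α] (E : Set α) :
    ∃ H : Set α, HasBP H ∧ E ⊆ H ∧ ∀ Z : Set α, HasBP Z → Z ⊆ H \ E → IsMeagre Z := by
  classical
  set 𝒱 : Set (Set α) := {V ∈ countableBasis α | IsMeagre (E ∩ V)} with h𝒱
  set W : Set α := ⋃₀ 𝒱 with hW
  have hWopen : IsOpen W := isOpen_sUnion (fun V hV => isOpen_of_mem_countableBasis hV.1)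
  have hEW : IsMeagre (E ∩ W) := by
    have hsub : E ∩ W ⊆ ⋃₀ ((fun V => E ∩ V) '' 𝒱) := by
      rintro x ⟨hxE, hxW⟩
      obtain ⟨V, hV, hxV⟩ := hxW
      exact ⟨E ∩ V, ⟨V, hV, rfl⟩, hxE, hxV⟩
    refine (isMeagre_sUnion (((countable_countableBasis α).mono (fun V hV => hV.1)).image _)
      ?_).mono hsub
    rintro t ⟨V, hV, rfl⟩
    exact hV.2
  refine ⟨Wᶜ ∪ (E ∩ W), ?_, ?_, ?_⟩
  · refine HasBP.of_symmDiff_meagre (hWopen.isClosed_compl.hasBP) (hEW.mono ?_)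
    intro x hx
    rw [Set.mem_symmDiff] at hx
    rcases hx with ⟨hx1, hx2⟩ | ⟨hx1, hx2⟩
    · rcases hx1 with h1 | h1
      · exact absurd h1 hx2
      · exact h1
    · exact absurd (Or.inl hx1) hx2
  · intro x hx
    by_cases hxW : x ∈ W
    · exact Or.inr ⟨hx, hxW⟩
    · exact Or.inl hxW
  · intro Z hZ hZsub
    by_contra hnm
    obtain ⟨u, hu, hm⟩ := hZ
    have hZE : ∀ x ∈ Z, x ∉ E := fun x hx => (hZsub hx).2
    have hZW : ∀ x ∈ Z, x ∉ W := by
      intro x hx hxW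
      rcases (hZsub hx).1 with h | h
      · exact h hxW
      · exact hZE x hx h.1
    have hune : u.Nonempty := by
      rcases Set.eq_empty_or_nonempty u with rfl | h
      · exfalso
        refine hnm (hm.mono ?_)
        intro x hx
        rw [Set.mem_symmDiff]
        exact Or.inl ⟨hx, fun h' => h'⟩
      · exact h
    obtain ⟨x, hxu⟩ := hune
    obtain ⟨V, hVb, hxV, hVu⟩ :=
      (isBasis_countableBasis α).exists_subset_of_mem_open hxu hu
    have hVZ : V \ Z ⊆ Z ∆ u := by
      rintro y ⟨hy1, hy2⟩
      rw [Set.mem_symmDiff]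
      exact Or.inr ⟨hVu hy1, hy2⟩
    have hV𝒱 : V ∈ 𝒱 := by
      refine ⟨hVb, (hm.mono ?_)⟩
      rintro y ⟨hyE, hyV⟩
      exact hVZ ⟨hyV, fun hyZ => hZE y hyZ hyE⟩
    have hVW : V ⊆ W := fun y hy => ⟨V, hV𝒱, hy⟩
    have hVWm : V ∩ W ⊆ Z ∆ u := by
      rintro y ⟨hy1, hy2⟩
      exact hVZ ⟨hy1, fun hyZ => hZW y hyZ hy2⟩
    have hVempty : V ∩ W = ∅ :=
      isOpen_meagre_empty ((isOpen_of_mem_countableBasis hVb).inter hWopen) (hm.mono hVWm)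
    have hmem : x ∈ V ∩ W := ⟨hxV, hVW hxV⟩
    rw [hVempty] at hmem
    exact hmem
end BP

set_option linter.unusedSectionVars false

section Nik
variable {α : Type} [TopologicalSpace α]

/-- the sets A_l -/
def sousPart (s : List ℕ → Set α) (l : List ℕ) : Set α :=
  ⋃ σ : ℕ → ℕ, ⋂ n : ℕ, s (l ++ (List.range n).map σ)

lemma sousPart_nil (s : List ℕ → Set α) : sousPart s [] = souslinOp s := by
  simp [sousPart, souslinOp]

lemma sousPart_subset (s : List ℕ → Set α) (l : List ℕ) : sousPart s l ⊆ s l := by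
  rintro x hx
  obtain ⟨S, ⟨σ, rfl⟩, hxS⟩ := hx
  have := mem_iInter.1 hxS 0
  simpa using this

lemma sousPart_subset_iUnion (s : List ℕ → Set α) (l : List ℕ) :
    sousPart s l ⊆ ⋃ m : ℕ, sousPart s (l ++ [m]) := by
  rintro x hx
  obtain ⟨S, ⟨σ, rfl⟩, hxS⟩ := hx
  refine mem_iUnion.2 ⟨σ 0, mem_iUnion.2 ⟨fun n => σ (n+1), mem_iInter.2 (fun n => ?_)⟩⟩
  have h1 := mem_iInter.1 hxS (n+1)
  have h2 : (List.range (n+1)).map σ = σ 0 :: (List.range n).map (fun k => σ (k+1)) := by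
    rw [List.range_succ_eq_map, List.map_cons, List.map_map]
    rfl
  rw [h2] at h1
  simpa using h1

/-- monotone version of sousPart for a monotone scheme -/
lemma sousPart_concat_subset {s : List ℕ → Set α}
    (hmon : ∀ l m, s (l ++ [m]) ⊆ s l) (l : List ℕ) (m : ℕ) :
    sousPart s (l ++ [m]) ⊆ sousPart s l := by
  rintro x hx
  obtain ⟨S, ⟨σ, rfl⟩, hxS⟩ := hx
  refine mem_iUnion.2 ⟨fun n => Nat.casesOn n m (fun k => σ k), mem_iInter.2 (fun n => ?_)⟩
  cases n with
  | zero =>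
    have h0 := mem_iInter.1 hxS 0
    simp only [List.range_zero, List.map_nil, List.append_nil] at h0 ⊢
    exact hmon l m h0
  | succ k =>
    have hk := mem_iInter.1 hxS k
    have h2 : (List.range (k+1)).map (fun n => Nat.casesOn n m (fun j => σ j) : ℕ → ℕ)
        = m :: (List.range k).map σ := by
      rw [List.range_succ_eq_map, List.map_cons, List.map_map]
      rfl
    rw [h2]
    simpa [List.append_assoc] using hk

lemma sousPart_take_subset {s : List ℕ → Set α}
    (hmon : ∀ l m, s (l ++ [m]) ⊆ s l) (l : List ℕ) (k : ℕ) :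
    sousPart s l ⊆ sousPart s (l.take k) := by
  induction l using List.reverseRecOn generalizing k with
  | nil => simp
  | append_singleton l a ih =>
    rcases le_or_gt k l.length with h | h
    · rw [List.take_append_of_le_length h]
      exact (sousPart_concat_subset hmon l a).trans (ih k)
    · rw [List.take_of_length_le (by simp; omega)]

set_option linter.unusedSectionVars false

/-- monotonization of a Souslin scheme -/
def monScheme (s : List ℕ → Set α) (l : List ℕ) : Set α :=
  ⋂ k : Fin (l.length + 1), s (l.take k)

lemma monScheme_mono (s : List ℕ → Set α) (l : List ℕ) (m : ℕ) :
    monScheme s (l ++ [m]) ⊆ monScheme s l := by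
  intro x hx
  refine mem_iInter.2 (fun k => ?_)
  have hk : (k : ℕ) ≤ l.length := by omega
  have := mem_iInter.1 hx ⟨(k : ℕ), by simp⟩
  simpa [List.take_append_of_le_length hk] using this

lemma souslinOp_monScheme (s : List ℕ → Set α) :
    souslinOp (monScheme s) = souslinOp s := by
  ext x
  constructor
  · rintro ⟨S, ⟨σ, rfl⟩, hx⟩
    refine mem_iUnion.2 ⟨σ, mem_iInter.2 (fun n => ?_)⟩
    have h3 := mem_iInter.1 (mem_iInter.1 hx n) ⟨n, by simp⟩
    rw [List.take_of_length_le (by simp)] at h3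
    exact h3
  · rintro ⟨S, ⟨σ, rfl⟩, hx⟩
    refine mem_iUnion.2 ⟨σ, mem_iInter.2 (fun n => ?_)⟩
    refine mem_iInter.2 (fun k => ?_)
    have hk : (k : ℕ) ≤ n := by
      have := k.2; simp at this; omega
    have h2 : (((List.range n).map σ).take k) = (List.range (k : ℕ)).map σ := by
      rw [← List.map_take, List.take_range, min_eq_left hk]
    rw [h2]
    exact mem_iInter.1 hx (k : ℕ)

variable [SecondCountableTopology α] [BaireSpace α]

lemma hasBP_inter {s t : Set α} (hs : HasBP s) (ht : HasBP t) : HasBP (s ∩ t) := by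
  have h : s ∩ t = (sᶜ ∪ tᶜ)ᶜ := by simp
  rw [h]
  exact (hasBP_union hs.compl ht.compl).compl

/-- **Nikodym's theorem**: the Souslin operation preserves the Baire property. -/
theorem hasBP_souslinOp {s : List ℕ → Set α} (hs : ∀ l, HasBP (s l)) :
    HasBP (souslinOp s) := by
  classical
  -- monotonize
  set s' : List ℕ → Set α := monScheme s with hs'def
  have hs'BP : ∀ l, HasBP (s' l) := fun l => hasBP_iInter (fun k => hs _)
  have hmon : ∀ l m, s' (l ++ [m]) ⊆ s' l := monScheme_mono s
  rw [← souslinOp_monScheme s]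
  -- envelopes
  have henv := fun l : List ℕ => exists_envelope (α := α) (sousPart s' l)
  choose H0 hH0BP hH0sub hH0min using henv
  set H : List ℕ → Set α :=
    fun l => (⋂ k : Fin (l.length + 1), H0 (l.take k)) ∩ s' l with hHdef
  have hHBP : ∀ l, HasBP (H l) := fun l =>
    hasBP_inter (hasBP_iInter (fun k => hH0BP _)) (hs'BP l)
  have hAH : ∀ l, sousPart s' l ⊆ H l := by
    intro l x hx
    exact ⟨mem_iInter.2 (fun k => hH0sub _ (sousPart_take_subset hmon l k hx)),
      sousPart_subset s' l hx⟩
  have hHs' : ∀ l, H l ⊆ s' l := fun l => inter_subset_right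
  have hHH0 : ∀ l, H l ⊆ H0 l := by
    intro l x hx
    have := mem_iInter.1 hx.1 ⟨l.length, by omega⟩
    simpa [List.take_length] using this
  have hHmin : ∀ l (Z : Set α), HasBP Z → Z ⊆ H l \ sousPart s' l → IsMeagre Z := by
    intro l Z hZ hZsub
    exact hH0min l Z hZ (fun x hx => ⟨hHH0 l (hZsub hx).1, (hZsub hx).2⟩)
  -- the meagre error set
  set M : Set α := ⋃ l : List ℕ, (H l \ ⋃ m : ℕ, H (l ++ [m])) with hMdef
  have hMmeagre : IsMeagre M := by
    refine isMeagre_iUnion' (fun l => ?_)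
    refine hHmin l _ ?_ ?_
    · have : H l \ ⋃ m : ℕ, H (l ++ [m]) = H l ∩ (⋃ m : ℕ, H (l ++ [m]))ᶜ := rfl
      rw [this]
      exact hasBP_inter (hHBP l) (hasBP_iUnion (fun m => hHBP _)).compl
    · rintro x ⟨hx1, hx2⟩
      refine ⟨hx1, fun hxA => hx2 ?_⟩
      obtain ⟨S, ⟨m, rfl⟩, hm⟩ := sousPart_subset_iUnion s' l hxA
      exact mem_iUnion.2 ⟨m, hAH _ hm⟩
  -- H [] \ M ⊆ souslinOp s'
  have hkey : H [] \ M ⊆ souslinOp s' := by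
    rintro x ⟨hx0, hxM⟩
    have hstep : ∀ (l : List ℕ), x ∈ H l → ∃ m : ℕ, x ∈ H (l ++ [m]) := by
      intro l hxl
      by_contra hcon
      push_neg at hcon
      exact hxM (mem_iUnion.2 ⟨l, hxl, fun hx' => by
        obtain ⟨S, ⟨m, rfl⟩, hm⟩ := hx'
        exact hcon m hm⟩)
    -- build the branch
    let F : ℕ → Σ' l : List ℕ, x ∈ H l := fun n =>
      Nat.rec ⟨[], hx0⟩
        (fun _ p => ⟨p.1 ++ [Classical.choose (hstep p.1 p.2)],
          Classical.choose_spec (hstep p.1 p.2)⟩) n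
    set σ : ℕ → ℕ := fun n => Classical.choose (hstep (F n).1 (F n).2) with hσdef
    have hF : ∀ n, (F n).1 = (List.range n).map σ := by
      intro n
      induction n with
      | zero => rfl
      | succ k ih =>
        have : (F (k+1)).1 = (F k).1 ++ [σ k] := rfl
        rw [this, ih, List.range_succ, List.map_append]
        rfl
    refine mem_iUnion.2 ⟨σ, mem_iInter.2 (fun n => ?_)⟩
    have := (F n).2
    rw [hF n] at this
    exact hHs' _ this
  have hsub : (souslinOp s') ∆ (H []) ⊆ M := by
    intro x hx
    rw [Set.mem_symmDiff] at hx
    rcases hx with ⟨hx1, hx2⟩ | ⟨hx1, hx2⟩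
    · exact absurd (hAH [] (by rw [sousPart_nil]; exact hx1)) hx2
    · by_contra hxM
      exact hx2 (hkey ⟨hx1, hxM⟩)
  exact HasBP.of_symmDiff_meagre (hHBP []) (hMmeagre.mono hsub)

end Nik


section SMeasLemmas

theorem SMeas.hasBP {α : Type} [τ : TopologicalSpace α] [SecondCountableTopology α]
    [BaireSpace α] {A : Set α} (h : SMeas τ A) : HasBP A :=
  h {B | HasBP B} (fun _ hU => IsOpen.hasBP hU) (fun _ hB => hB.compl)
    (fun _ _ hB hB' => hasBP_union hB hB') (fun _ hs => hasBP_souslinOp hs)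

theorem SMeas.preimage {α β : Type} {τα : TopologicalSpace α} {τβ : TopologicalSpace β}
    {f : α → β} (hf : Continuous[τα, τβ] f) {A : Set β} (h : SMeas τβ A) :
    SMeas τα (f ⁻¹' A) := by
  intro C h1 h2 h3 h4
  refine h {B | f ⁻¹' B ∈ C} (fun U hU => h1 _ (hf.isOpen_preimage U hU)) ?_ ?_ ?_
  · intro B hB
    show f ⁻¹' Bᶜ ∈ C
    have he : f ⁻¹' Bᶜ = (f ⁻¹' B)ᶜ := rfl
    rw [he]
    exact h2 _ hB
  · intro B B' hB hB'
    show f ⁻¹' (B ∪ B') ∈ C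
    have he : f ⁻¹' (B ∪ B') = f ⁻¹' B ∪ f ⁻¹' B' := rfl
    rw [he]
    exact h3 _ _ hB hB'
  · intro s hs
    show f ⁻¹' souslinOp s ∈ C
    have he : f ⁻¹' souslinOp s = souslinOp (fun l => f ⁻¹' s l) := by
      simp [souslinOp, Set.preimage_iUnion, Set.preimage_iInter]
    rw [he]
    exact h4 _ hs

end SMeasLemmas

section Fusion

variable {I : Type} [Countable I] [DecidableEq I]
variable {Λ : Type} [TopologicalSpace Λ] [DiscreteTopology Λ] [Finite Λ] [Nonempty Λ]

/-- The cylinder fixing values `f` on the finite set `s`. -/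
def Cyl (s : Finset I) (f : I → Λ) : Set (I → Λ) := {a | ∀ i ∈ s, a i = f i}

lemma mem_Cyl_self (s : Finset I) (f : I → Λ) : f ∈ Cyl s f := fun _ _ => rfl

lemma isOpen_Cyl (s : Finset I) (f : I → Λ) : IsOpen (Cyl s f) := by
  have he : Cyl s f = ⋂ i ∈ s, (fun a : I → Λ => a i) ⁻¹' {f i} := by
    ext a; simp [Cyl]
  rw [he]
  exact isOpen_biInter_finset (fun i _ => (continuous_apply i).isOpen_preimage _ (isOpen_discrete _))

lemma exists_Cyl_subset {U : Set (I → Λ)} (hU : IsOpen U) {a : I → Λ} (ha : a ∈ U) :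
    ∃ s : Finset I, Cyl s a ⊆ U := by
  obtain ⟨F, u, hu, hsub⟩ := isOpen_pi_iff.1 hU a ha
  refine ⟨F, fun b hb => hsub ?_⟩
  intro i hi
  rw [hb i hi]
  exact (hu i hi).2

/-- Override on a finite set. -/
def ovr (B : Finset I) (η : ↥B → Λ) (a : I → Λ) : I → Λ :=
  fun i => if h : i ∈ B then η ⟨i, h⟩ else a i

lemma continuous_ovr (B : Finset I) (η : ↥B → Λ) : Continuous (ovr B η) := by
  refine continuous_pi (fun i => ?_)
  by_cases h : i ∈ B
  · simpa [ovr, h] using continuous_const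
  · simpa [ovr, h] using continuous_apply i

lemma ovr_eq_of_agree (B : Finset I) (η : ↥B → Λ) {a a' : I → Λ}
    (h : ∀ i, i ∉ B → a i = a' i) : ovr B η a = ovr B η a' := by
  funext i
  by_cases hi : i ∈ B
  · simp [ovr, hi]
  · simp only [ovr, dif_neg hi]
    exact h i hi

lemma ovr_self (B : Finset I) (a : I → Λ) : ovr B (fun i => a i) a = a := by
  funext i
  by_cases hi : i ∈ B <;> simp [ovr, hi]

/-- The set of `a` all of whose `B`-variations lie in `U`. -/
def UBset (B : Finset I) (U : Set (I → Λ)) : Set (I → Λ) :=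
  ⋂ η : ↥B → Λ, (ovr B η) ⁻¹' U

lemma isOpen_UBset (B : Finset I) {U : Set (I → Λ)} (hU : IsOpen U) : IsOpen (UBset B U) :=
  isOpen_iInter_of_finite (fun η => (continuous_ovr B η).isOpen_preimage _ hU)

lemma UBset_invariant (B : Finset I) (U : Set (I → Λ)) {a a' : I → Λ}
    (h : ∀ i, i ∉ B → a i = a' i) (ha : a ∈ UBset B U) : a' ∈ UBset B U := by
  refine mem_iInter.2 (fun η => ?_)
  have := mem_iInter.1 ha η
  rwa [Set.mem_preimage, ovr_eq_of_agree B η h] at this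

lemma UBset_subset (B : Finset I) (U : Set (I → Λ)) {a : I → Λ} (ha : a ∈ UBset B U) :
    a ∈ U := by
  have := mem_iInter.1 ha (fun i => a i)
  rwa [Set.mem_preimage, ovr_self] at this

lemma dense_ovr_preimage [BaireSpace (I → Λ)] (B : Finset I) (η : ↥B → Λ)
    {U : Set (I → Λ)} (hUo : IsOpen U) (hUd : Dense U) : Dense ((ovr B η) ⁻¹' U) := by
  rw [dense_iff_inter_open]
  rintro O hO ⟨a₀, ha₀⟩
  obtain ⟨F, hF⟩ := exists_Cyl_subset hO ha₀
  -- the point y₀ = ovr B η a₀, find y ∈ U agreeing with y₀ on F ∪ B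
  obtain ⟨y, hy1, hy2⟩ := hUd.inter_open_nonempty (Cyl (F ∪ B) (ovr B η a₀))
    (isOpen_Cyl _ _) ⟨_, mem_Cyl_self _ _⟩
  classical
  set a : I → Λ := fun i => if i ∈ B then a₀ i else y i with hadef
  refine ⟨a, ?_, ?_⟩
  · refine hF (fun i hi => ?_)
    by_cases hiB : i ∈ B
    · simp [hadef, hiB]
    · have h1 : a i = y i := by simp [hadef, hiB]
      have h2 : y i = ovr B η a₀ i := hy1 i (Finset.mem_union_left _ hi)
      rw [h1, h2]
      simp [ovr, hiB]
  · show ovr B η a ∈ U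
    have he : ovr B η a = y := by
      funext i
      by_cases hiB : i ∈ B
      · have : y i = ovr B η a₀ i := hy1 i (Finset.mem_union_right _ hiB)
        rw [this]
        simp [ovr, hiB]
      · simp [ovr, hiB, hadef]
    rwa [he]

lemma dense_UBset [BaireSpace (I → Λ)] (B : Finset I) {U : Set (I → Λ)}
    (hUo : IsOpen U) (hUd : Dense U) : Dense (UBset B U) :=
  dense_iInter_of_isOpen
    (fun η => (continuous_ovr B η).isOpen_preimage _ hUo)
    (fun η => dense_ovr_preimage B η hUo hUd)

end Fusion

section Fusion2

variable {I : Type} [Countable I] [DecidableEq I]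
variable {Λ : Type} [TopologicalSpace Λ] [DiscreteTopology Λ] [Finite Λ] [Nonempty Λ]

lemma Nat.set_infinite_exists_gt {S : Set ℕ} (hS : S.Infinite) (N : ℕ) :
    ∃ m ∈ S, N < m := by
  by_contra h
  push_neg at h
  exact hS (Set.Finite.subset (Set.finite_Iic N) (fun x hx => h x hx))

lemma fusion_step [BaireSpace (I → Λ)] {lvl : I → ℕ}
    (hfin : ∀ n : ℕ, {i : I | lvl i = n}.Finite)
    {S₀ : Set ℕ} (hS₀ : S₀.Infinite) {U : Set (I → Λ)} (hUo : IsOpen U) (hUd : Dense U)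
    (s : Finset I) (f : I → Λ) (L : Finset ℕ) (ℓ : ℕ) :
    ∃ (s' : Finset I) (f' : I → Λ) (ℓ' : ℕ) (B' : Finset I),
      ℓ < ℓ' ∧ ℓ' ∈ S₀ ∧ (∀ m ∈ L, m < ℓ') ∧
      (∀ i : I, i ∈ B' ↔ lvl i ∈ insert ℓ' L) ∧
      ((∀ i ∈ s, lvl i ∉ L) → s ⊆ s') ∧
      (∀ i ∈ s, f' i = f i) ∧
      (∀ i ∈ s', lvl i ∉ insert ℓ' L) ∧
      Cyl s' f' ⊆ UBset B' U := by
  classical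
  obtain ⟨ℓ', hℓ'S₀, hℓ'gt⟩ :=
    Nat.set_infinite_exists_gt hS₀ (ℓ + L.sup id + s.sup lvl)
  have hBfin : {i : I | lvl i ∈ insert ℓ' L}.Finite := by
    have hsub : {i : I | lvl i ∈ insert ℓ' L} ⊆ ⋃ n ∈ (insert ℓ' L : Finset ℕ), {i : I | lvl i = n} := by
      intro i hi
      exact Set.mem_biUnion hi rfl
    exact Set.Finite.subset (Set.Finite.biUnion (Finset.finite_toSet _) (fun n _ => hfin n)) hsub
  set B' : Finset I := hBfin.toFinset with hB'def
  have hB'mem : ∀ i : I, i ∈ B' ↔ lvl i ∈ insert ℓ' L := by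
    intro i
    rw [hB'def, Set.Finite.mem_toFinset]
    simp
  have hUBo : IsOpen (UBset B' U) := isOpen_UBset B' hUo
  have hUBd : Dense (UBset B' U) := dense_UBset B' hUo hUd
  obtain ⟨z, hz1, hz2⟩ := hUBd.inter_open_nonempty (Cyl s f) (isOpen_Cyl s f)
    ⟨f, mem_Cyl_self s f⟩
  obtain ⟨F, hF⟩ := exists_Cyl_subset hUBo hz2
  refine ⟨(F ∪ s) \ B', z, ℓ', B', by omega, hℓ'S₀, ?_, hB'mem, ?_, ?_, ?_, ?_⟩
  · intro m hm
    have : m ≤ L.sup id := Finset.le_sup (f := id) hm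
    omega
  · intro hINV i hi
    have h1 : lvl i ≤ s.sup lvl := Finset.le_sup hi
    have h2 : i ∉ B' := by
      rw [hB'mem]
      simp only [Finset.mem_insert]
      rintro (h | h)
      · omega
      · exact hINV i hi h
    exact Finset.mem_sdiff.2 ⟨Finset.mem_union_right _ hi, h2⟩
  · intro i hi
    exact hz1 i hi
  · intro i hi
    have := (Finset.mem_sdiff.1 hi).2
    rw [hB'mem] at this
    simpa using this
  · intro a ha
    have ha' : (fun i => if i ∈ B' then z i else a i) ∈ Cyl F z := by
      intro i hi
      by_cases hiB : i ∈ B'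
      · simp [hiB]
      · have : i ∈ (F ∪ s) \ B' := Finset.mem_sdiff.2 ⟨Finset.mem_union_left _ hi, hiB⟩
        simp [hiB, ha i this]
    have hUB := hF ha'
    exact UBset_invariant B' U (fun i hi => by simp [hi]) hUB

lemma fusion_main [BaireSpace (I → Λ)] {lvl : I → ℕ}
    (hfin : ∀ n : ℕ, {i : I | lvl i = n}.Finite)
    {S₀ : Set ℕ} (hS₀ : S₀.Infinite)
    (U : ℕ → Set (I → Λ)) (hUo : ∀ n, IsOpen (U n)) (hUd : ∀ n, Dense (U n))
    (s₀ : Finset I) (f₀ : I → Λ) :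
    ∃ (S : Set ℕ) (g : I → Λ), S ⊆ S₀ ∧ S.Infinite ∧ (∀ i ∈ s₀, g i = f₀ i) ∧
      ∀ b : I → Λ, (∀ i : I, lvl i ∉ S → b i = g i) →
        (b ∈ Cyl s₀ f₀ ∧ ∀ n, b ∈ U n) := by
  classical
  have hstep : ∀ (n : ℕ) (t : Finset I × (I → Λ) × Finset ℕ × ℕ),
      ∃ t' : Finset I × (I → Λ) × Finset ℕ × ℕ,
        t.2.2.2 < t'.2.2.2 ∧ t'.2.2.2 ∈ S₀ ∧ (∀ m ∈ t.2.2.1, m < t'.2.2.2) ∧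
        t'.2.2.1 = insert t'.2.2.2 t.2.2.1 ∧
        ((∀ i ∈ t.1, lvl i ∉ t.2.2.1) → t.1 ⊆ t'.1) ∧
        (∀ i ∈ t.1, t'.2.1 i = t.2.1 i) ∧
        (∀ i ∈ t'.1, lvl i ∉ t'.2.2.1) ∧
        ∃ B' : Finset I, (∀ i : I, i ∈ B' ↔ lvl i ∈ t'.2.2.1) ∧
          Cyl t'.1 t'.2.1 ⊆ UBset B' (U n) := by
    intro n t
    obtain ⟨s', f', ℓ', B', h1, h2, h3, h4, h5, h6, h7, h8⟩ :=
      fusion_step hfin hS₀ (hUo n) (hUd n) t.1 t.2.1 t.2.2.1 t.2.2.2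
    exact ⟨(s', f', insert ℓ' t.2.2.1, ℓ'), h1, h2, h3, rfl, h5, h6, h7, B', h4, h8⟩
  let Fr : ℕ → Finset I × (I → Λ) × Finset ℕ × ℕ := fun n =>
    Nat.rec (s₀, f₀, (∅ : Finset ℕ), 0) (fun k t => Classical.choose (hstep k t)) n
  have hFr : ∀ n, Fr (n+1) = Classical.choose (hstep n (Fr n)) := fun n => rfl
  set sF : ℕ → Finset I := fun n => (Fr n).1 with hsF
  set fF : ℕ → I → Λ := fun n => (Fr n).2.1 with hfF
  set LF : ℕ → Finset ℕ := fun n => (Fr n).2.2.1 with hLF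
  set ℓF : ℕ → ℕ := fun n => (Fr n).2.2.2 with hℓF
  have hspec : ∀ n, ℓF n < ℓF (n+1) ∧ ℓF (n+1) ∈ S₀ ∧ (∀ m ∈ LF n, m < ℓF (n+1)) ∧
      LF (n+1) = insert (ℓF (n+1)) (LF n) ∧
      ((∀ i ∈ sF n, lvl i ∉ LF n) → sF n ⊆ sF (n+1)) ∧
      (∀ i ∈ sF n, fF (n+1) i = fF n i) ∧
      (∀ i ∈ sF (n+1), lvl i ∉ LF (n+1)) ∧
      ∃ B' : Finset I, (∀ i : I, i ∈ B' ↔ lvl i ∈ LF (n+1)) ∧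
        Cyl (sF (n+1)) (fF (n+1)) ⊆ UBset B' (U n) := by
    intro n
    exact Classical.choose_spec (hstep n (Fr n))
  -- invariants
  have hINV : ∀ n, ∀ i ∈ sF n, lvl i ∉ LF n := by
    intro n
    cases n with
    | zero => intro i _ h; exact absurd h (Finset.notMem_empty _)
    | succ k => exact (hspec k).2.2.2.2.2.2.1
  have hsmono : ∀ n, sF n ⊆ sF (n+1) := fun n => (hspec n).2.2.2.2.1 (hINV n)
  have hschain : ∀ m n, m ≤ n → sF m ⊆ sF n := by
    intro m n hmn
    induction n with
    | zero => cases Nat.le_zero.1 hmn; exact fun _ h => h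
    | succ k ih =>
      rcases Nat.lt_or_ge m (k+1) with h | h
      · exact fun i hi => hsmono k (ih (by omega) hi)
      · have : m = k + 1 := by omega
        subst this; exact fun _ h => h
  have hfchain : ∀ m n, m ≤ n → ∀ i ∈ sF m, fF n i = fF m i := by
    intro m n hmn
    induction n with
    | zero => cases Nat.le_zero.1 hmn; exact fun i _ => rfl
    | succ k ih =>
      rcases Nat.lt_or_ge m (k+1) with h | h
      · intro i hi
        rw [(hspec k).2.2.2.2.2.1 i (hschain m k (by omega) hi), ih (by omega) i hi]
      · have : m = k + 1 := by omega
        subst this; exact fun i _ => rfl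
  have hℓmono : StrictMono (fun n => ℓF (n+1)) :=
    strictMono_nat_of_lt_succ (fun n => (hspec (n+1)).1)
  have hLmem : ∀ n x, x ∈ LF n ↔ ∃ k, k < n ∧ x = ℓF (k+1) := by
    intro n
    induction n with
    | zero => intro x; simp [show LF 0 = ∅ from rfl]
    | succ m ih =>
      intro x
      rw [(hspec m).2.2.2.1]
      simp only [Finset.mem_insert, ih x]
      constructor
      · rintro (rfl | ⟨k, hk, rfl⟩)
        · exact ⟨m, by omega, rfl⟩
        · exact ⟨k, by omega, rfl⟩
      · rintro ⟨k, hk, rfl⟩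
        rcases Nat.lt_or_ge k m with h | h
        · exact Or.inr ⟨k, h, rfl⟩
        · have : k = m := by omega
          subst this; exact Or.inl rfl
  set S : Set ℕ := Set.range (fun n => ℓF (n+1)) with hSdef
  have hSsub : S ⊆ S₀ := by
    rintro x ⟨n, rfl⟩
    exact (hspec n).2.1
  have hSinf : S.Infinite := Set.infinite_range_of_injective hℓmono.injective
  -- no element of any sF has level in S
  have hnoS : ∀ n, ∀ i ∈ sF n, lvl i ∉ S := by
    rintro n i hi ⟨k, hk⟩
    have h1 : i ∈ sF (max n (k+1)) := hschain n _ (le_max_left _ _) hi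
    have h2 : lvl i ∈ LF (max n (k+1)) := by
      rw [hLmem]
      exact ⟨k, by omega, hk.symm⟩
    exact hINV _ i h1 h2
  -- the limit function
  set g : I → Λ := fun i => if h : ∃ n, i ∈ sF n then fF (Nat.find h) i else f₀ i with hgdef
  have hg : ∀ n, ∀ i ∈ sF n, g i = fF n i := by
    intro n i hi
    have hex : ∃ m, i ∈ sF m := ⟨n, hi⟩
    have h1 : Nat.find hex ≤ n := Nat.find_le hi
    have h2 : i ∈ sF (Nat.find hex) := Nat.find_spec hex
    rw [hgdef]
    simp only [dif_pos hex]
    exact (hfchain _ n h1 i h2).symm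
  refine ⟨S, g, hSsub, hSinf, fun i hi => hg 0 i hi, ?_⟩
  intro b hb
  have hbC : ∀ n, b ∈ Cyl (sF n) (fF n) := by
    intro n i hi
    rw [hb i (hnoS n i hi)]
    exact hg n i hi
  constructor
  · exact hbC 0
  · intro n
    obtain ⟨B', hB'1, hB'2⟩ := (hspec n).2.2.2.2.2.2.2
    exact UBset_subset B' (U n) (hB'2 (hbC (n+1)))

end Fusion2

section Trees

variable {d : ℕ} {V : Fin (d + 1) → TreeT}

lemma TreeT.level_finite (T : TreeT) : ∀ n : ℕ, {u : List ℕ | T.mem u ∧ u.length = n}.Finite := by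
  intro n
  induction n with
  | zero =>
    refine Set.Finite.subset (Set.finite_singleton []) ?_
    rintro u ⟨_, hu⟩
    simp [List.length_eq_zero_iff.1 hu]
  | succ k ih =>
    have hsub : {u : List ℕ | T.mem u ∧ u.length = k + 1} ⊆
        ⋃ s ∈ {u : List ℕ | T.mem u ∧ u.length = k},
          (fun m => s ++ [m]) '' {m : ℕ | T.mem (s ++ [m])} := by
      rintro u ⟨hu, hlen⟩
      have hne : u ≠ [] := by
        intro h; subst h; simp at hlen
      have hu' : u.dropLast ++ [u.getLast hne] = u := List.dropLast_append_getLast hne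
      refine Set.mem_biUnion (⟨T.pref _ _ (by rw [hu']; exact hu), by
        simp [List.length_dropLast, hlen]⟩ :
          u.dropLast ∈ {u : List ℕ | T.mem u ∧ u.length = k})
        ⟨u.getLast hne, show T.mem (u.dropLast ++ [u.getLast hne]) by rw [hu']; exact hu, hu'⟩
    exact Set.Finite.subset
      (Set.Finite.biUnion ih (fun s hs => Set.Finite.image _ (T.finBranch s hs.1))) hsub

lemma TreeT.extend (T : TreeT) (k : ℕ) : ∀ (u : List ℕ), T.mem u →
    ∃ w, T.mem w ∧ w.length = u.length + k ∧ u <+: w := by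
  induction k with
  | zero => exact fun u hu => ⟨u, hu, rfl, List.prefix_refl u⟩
  | succ m ih =>
    intro u hu
    obtain ⟨w, hw, hlen, hpre⟩ := ih u hu
    obtain ⟨n, hn⟩ := T.noMax w hw
    exact ⟨w ++ [n], hn, by simp [hlen]; omega, hpre.trans ⟨[n], rfl⟩⟩

lemma TreeT.extend_to (T : TreeT) {u : List ℕ} (hu : T.mem u) {m : ℕ} (h : u.length ≤ m) :
    ∃ w, T.mem w ∧ w.length = m ∧ u <+: w := by
  obtain ⟨w, hw, hlen, hpre⟩ := T.extend (m - u.length) u hu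
  exact ⟨w, hw, by omega, hpre⟩

lemma lp_level_finite (V : Fin (d + 1) → TreeT) (n : ℕ) : {t : LP V | lev t = n}.Finite := by
  have hpi : (Set.pi Set.univ (fun i => {u : List ℕ | (V i).mem u ∧ u.length = n})).Finite :=
    Set.Finite.pi (fun i => (V i).level_finite n)
  have hinj : Set.InjOn (fun t : LP V => t.1) {t | lev t = n} :=
    fun a _ b _ h => Subtype.ext h
  refine Set.Finite.of_finite_image (hpi.subset ?_) hinj
  rintro x ⟨t, ht, rfl⟩
  intro i _
  exact ⟨t.2.1 i, by rw [t.2.2 i]; exact ht⟩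

instance : Countable (LP V) := by
  unfold LP
  infer_instance

/-- Restriction of a vector subset to the levels in `S`. -/
def VecSub.restrictLvl (D : VecSub V) (S : Set ℕ) : VecSub V where
  sets := fun i => {u ∈ D.sets i | u.length ∈ S}
  mem := fun i u hu => D.mem i u hu.1
  lvl := by
    have key : ∀ i j : Fin (d + 1), ∀ n : ℕ,
        (∃ u ∈ {u ∈ D.sets i | u.length ∈ S}, u.length = n) →
        (∃ u ∈ {u ∈ D.sets j | u.length ∈ S}, u.length = n) := by
      rintro i j n ⟨u, ⟨hu1, hu2⟩, rfl⟩
      have h1 : u.length ∈ {n : ℕ | ∃ u ∈ D.sets i, u.length = n} := ⟨u, hu1, rfl⟩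
      rw [D.lvl i j] at h1
      obtain ⟨w, hw, hwn⟩ := h1
      exact ⟨w, ⟨hw, by rw [hwn]; exact hu2⟩, hwn⟩
    intro i j
    ext n
    exact ⟨fun h => key i j n h, fun h => key j i n h⟩

lemma restrictLvl_lvlSet (D : VecSub V) (S : Set ℕ) :
    (D.restrictLvl S).lvlSet = D.lvlSet ∩ S := by
  ext n
  constructor
  · rintro ⟨u, ⟨hu1, hu2⟩, rfl⟩
    exact ⟨⟨u, hu1, rfl⟩, hu2⟩
  · rintro ⟨⟨u, hu, rfl⟩, hn⟩
    exact ⟨u, ⟨hu, hn⟩, rfl⟩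

lemma mem_lprod_restrictLvl (D : VecSub V) (S : Set ℕ) (t : LP V) :
    t ∈ lprod (D.restrictLvl S) ↔ t ∈ lprod D ∧ lev t ∈ S := by
  constructor
  · intro h
    refine ⟨fun i => (h i).1, ?_⟩
    exact (h 0).2
  · rintro ⟨h1, h2⟩ i
    exact ⟨h1 i, by rw [t.2.2 i]; exact h2⟩

lemma restrictLvl_isDense (D : VecSub V) (hD : D.IsDense) {S : Set ℕ}
    (hS : S ⊆ D.lvlSet) (hSinf : S.Infinite) : (D.restrictLvl S).IsDense := by
  have hlvleq : (D.restrictLvl S).lvlSet = S := by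
    rw [restrictLvl_lvlSet]
    exact Set.inter_eq_self_of_subset_right hS
  classical
  constructor
  · rw [hlvleq]; exact hSinf
  · intro k i u hu hlen
    have hpred : (fun n => n ∈ (D.restrictLvl S).lvlSet) = (fun n => n ∈ S) := by
      funext x
      rw [hlvleq]
    have hLk : (D.restrictLvl S).L k = Nat.nth (fun n => n ∈ S) k := by
      unfold VecSub.L
      rw [hpred]
    have hSinf' : (setOf fun n => n ∈ S).Infinite := hSinf
    have hℓS : (D.restrictLvl S).L k ∈ S := by
      rw [hLk]
      exact Nat.nth_mem_of_infinite hSinf' k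
    have hDinf : (setOf fun n => n ∈ D.lvlSet).Infinite := hD.1
    set m : ℕ := Nat.count (fun n => n ∈ D.lvlSet) ((D.restrictLvl S).L k) with hm
    have hDLm : D.L m = (D.restrictLvl S).L k := by
      unfold VecSub.L
      exact Nat.nth_count (hS hℓS)
    have hkm : k ≤ m := by
      have h1 : Nat.count (fun n => n ∈ S) ((D.restrictLvl S).L k) = k := by
        rw [hLk]
        exact Nat.count_nth_of_infinite hSinf' k
      calc k = Nat.count (fun n => n ∈ S) ((D.restrictLvl S).L k) := h1.symm
        _ ≤ Nat.count (fun n => n ∈ D.lvlSet) ((D.restrictLvl S).L k) :=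
          Nat.count_mono_left (fun x _ hx => hS hx)
    obtain ⟨u', hu', hu'len, hu'pre⟩ := (V i).extend_to hu (m := m) (by omega)
    obtain ⟨w, hw, hwlen, hwpre⟩ := hD.2 m i u' hu' hu'len
    refine ⟨w, ⟨hw, ?_⟩, ?_, hu'pre.trans hwpre⟩
    · rw [hwlen, hDLm]; exact hℓS
    · rw [hwlen, hDLm]

end Trees

section SubspaceRestrict

variable {Λ : Type} {d : ℕ} {V : Fin (d + 1) → TreeT}

open Classical in
/-- The map of the subspace obtained from `Q` by keeping only the variables at levels in `S`
and substituting the letters `g` for the remaining variables. -/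
noncomputable def restrictQfun (Q : InfSubspace Λ V) (S : Set ℕ) (g : LP V → Λ) :
    LP V → Λ ⊕ LP V := fun x =>
  match Q.Q x with
  | Sum.inl a => Sum.inl a
  | Sum.inr t => if lev t ∈ S then Sum.inr t else Sum.inl (g t)

lemma restrictQfun_eq_inr (Q : InfSubspace Λ V) (S : Set ℕ) (g : LP V → Λ)
    (x t : LP V) : restrictQfun Q S g x = Sum.inr t ↔ (Q.Q x = Sum.inr t ∧ lev t ∈ S) := by
  classical
  rcases h : Q.Q x with v | t'
  · simp [restrictQfun, h]
  · simp only [restrictQfun, h]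
    by_cases h2 : lev t' ∈ S
    · simp only [if_pos h2]
      constructor
      · rintro h3
        cases h3
        exact ⟨rfl, h2⟩
      · rintro ⟨h3, _⟩
        cases h3
        rfl
    · simp only [if_neg h2]
      constructor
      · rintro ⟨⟩
      · rintro ⟨h3, h4⟩
        cases h3
        exact absurd h4 h2

lemma restrictQfun_occEq (Q : InfSubspace Λ V) (S : Set ℕ) (g : LP V → Λ)
    {t : LP V} (ht : lev t ∈ S) :
    {x | restrictQfun Q S g x = Sum.inr t} = {x | Q.Q x = Sum.inr t} := by
  ext x
  rw [Set.mem_setOf_eq, restrictQfun_eq_inr]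
  simp [ht]

/-- The restriction of a subspace to the variables at levels in `S`. -/
noncomputable def restrictSubspace (Q : InfSubspace Λ V) (S : Set ℕ)
    (hS : S ⊆ Q.D.lvlSet) (hSinf : S.Infinite) (g : LP V → Λ) : InfSubspace Λ V where
  Q := restrictQfun Q S g
  D := Q.D.restrictLvl S
  dense := restrictLvl_isDense Q.D Q.dense hS hSinf
  varIff := by
    intro t
    constructor
    · rintro ⟨x, hx⟩
      rw [restrictQfun_eq_inr] at hx
      exact (mem_lprod_restrictLvl Q.D S t).2 ⟨(Q.varIff t).1 ⟨x, hx.1⟩, hx.2⟩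
    · intro ht
      obtain ⟨ht1, ht2⟩ := (mem_lprod_restrictLvl Q.D S t).1 ht
      exact ⟨t, (restrictQfun_eq_inr Q S g t t).2 ⟨(Q.occMin t ht1).1, ht2⟩⟩
  occFin := by
    intro t ht
    obtain ⟨ht1, ht2⟩ := (mem_lprod_restrictLvl Q.D S t).1 ht
    rw [restrictQfun_occEq Q S g ht2]
    exact Q.occFin t ht1
  occMin := by
    intro t ht
    obtain ⟨ht1, ht2⟩ := (mem_lprod_restrictLvl Q.D S t).1 ht
    refine ⟨(restrictQfun_eq_inr Q S g t t).2 ⟨(Q.occMin t ht1).1, ht2⟩, ?_⟩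
    intro x hx
    rw [restrictQfun_eq_inr] at hx
    exact (Q.occMin t ht1).2 x hx.1
  sameLev := by
    intro t ht t' ht' hlev
    obtain ⟨ht1, ht2⟩ := (mem_lprod_restrictLvl Q.D S t).1 ht
    obtain ⟨ht1', ht2'⟩ := (mem_lprod_restrictLvl Q.D S t').1 ht'
    rw [restrictQfun_occEq Q S g ht2, restrictQfun_occEq Q S g ht2']
    exact Q.sameLev t ht1 t' ht1' hlev
  incLev := by
    intro t ht t' ht' hlev x y hx hy
    obtain ⟨ht1, ht2⟩ := (mem_lprod_restrictLvl Q.D S t).1 ht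
    obtain ⟨ht1', ht2'⟩ := (mem_lprod_restrictLvl Q.D S t').1 ht'
    rw [restrictQfun_eq_inr] at hx hy
    exact Q.incLev t ht1 t' ht1' hlev x y hx.1 hy.1

lemma spanInf_restrictSubspace_subset (Q : InfSubspace Λ V) (S : Set ℕ)
    (hS : S ⊆ Q.D.lvlSet) (hSinf : S.Infinite) (g : LP V → Λ) :
    spanInf (restrictSubspace Q S hS hSinf g) ⊆ spanInf Q := by
  classical
  rintro A ⟨a, rfl⟩
  refine ⟨fun t => if lev t ∈ S then a t else g t, ?_⟩
  funext x
  show Sum.elim id a (restrictQfun Q S g x) = _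
  rcases h : Q.Q x with v | t
  · rw [show restrictQfun Q S g x = Sum.inl v by simp [restrictQfun, h]]
    rfl
  · by_cases h2 : lev t ∈ S
    · rw [show restrictQfun Q S g x = Sum.inr t by
        rw [restrictQfun_eq_inr]; exact ⟨h, h2⟩]
      simp [h2]
    · rw [show restrictQfun Q S g x = Sum.inl (g t) by simp [restrictQfun, h, if_neg h2]]
      simp [h2]

end SubspaceRestrict

/-- **Hales–Jewett for words of infinite support.** For every finite Souslin measurable
coloring of `W^∞(Λ,T)` (all maps `⊗T → Λ`, with the product topology) and every subspace
`Q` of `W^∞(Λ,T)`, there is a further subspace `Q' ≤ Q` with `[Q']_Λ` monochromatic. -/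
theorem stmt13 {d : ℕ} (Λ : Type) [Finite Λ] (V : Fin (d + 1) → TreeT)
    (r : ℕ) (hr : 0 < r) (c : (LP V → Λ) → Fin r)
    (hc : ∀ γ : Fin r, SMeas (infTop Λ V) {A | c A = γ})
    (Q : InfSubspace Λ V) :
    ∃ Q' : InfSubspace Λ V,
      spanInf Q' ⊆ spanInf Q ∧
      ∃ γ : Fin r, ∀ A ∈ spanInf Q', c A = γ := by
  classical
  rcases isEmpty_or_nonempty Λ with hΛ | hΛ
  · -- empty alphabet: there are no total maps at all
    refine ⟨Q, Set.Subset.rfl, ⟨0, hr⟩, ?_⟩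
    intro A _
    exact (hΛ.false (A ⟨fun _ => [], fun i => (V i).root, fun _ => rfl⟩)).elim
  · letI : TopologicalSpace Λ := ⊥
    haveI : DiscreteTopology Λ := ⟨rfl⟩
    set D := Q.D with hD
    haveI hcntI : Countable ↥(lprod D) := Subtype.countable
    letI : DecidableEq ↥(lprod D) := Classical.decEq _
    haveI : CompactSpace (↥(lprod D) → Λ) := inferInstance
    haveI : T2Space (↥(lprod D) → Λ) := inferInstance
    haveI : LocallyCompactSpace (↥(lprod D) → Λ) := inferInstance
    haveI : BaireSpace (↥(lprod D) → Λ) := inferInstance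
    haveI : SecondCountableTopology (↥(lprod D) → Λ) := inferInstance
    -- the substitution map
    set extb : (↥(lprod D) → Λ) → LP V → Λ :=
      fun b t => if h : t ∈ lprod D then b ⟨t, h⟩ else hΛ.some with hextb
    set SQ : (↥(lprod D) → Λ) → LP V → Λ :=
      fun b x => Sum.elim id (extb b) (Q.Q x) with hSQ
    have hSQc : Continuous SQ := by
      refine continuous_pi (fun x => ?_)
      rcases h : Q.Q x with v | t
      · have he : (fun b : ↥(lprod D) → Λ => SQ b x) = fun _ => v := by
          funext b; simp [hSQ, h]
        rw [he]; exact continuous_const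
      · have htD : t ∈ lprod D := (Q.varIff t).1 ⟨x, h⟩
        have he : (fun b : ↥(lprod D) → Λ => SQ b x) = fun b => b ⟨t, htD⟩ := by
          funext b; simp [hSQ, h, hextb, htD]
        rw [he]; exact continuous_apply _
    have hBP : ∀ δ : Fin r, HasBP {b : ↥(lprod D) → Λ | c (SQ b) = δ} := by
      intro δ
      have hpre : {b : ↥(lprod D) → Λ | c (SQ b) = δ} = SQ ⁻¹' {A | c A = δ} := rfl
      rw [hpre]
      exact SMeas.hasBP (SMeas.preimage hSQc (hc δ))
    -- some colour class is non-meagre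
    have hex : ∃ δ : Fin r, ¬ IsMeagre {b : ↥(lprod D) → Λ | c (SQ b) = δ} := by
      by_contra hcon
      push_neg at hcon
      have huniv : (Set.univ : Set (↥(lprod D) → Λ)) = ⋃ δ : Fin r, {b | c (SQ b) = δ} := by
        ext b; simp
      have hme : IsMeagre (Set.univ : Set (↥(lprod D) → Λ)) := by
        rw [huniv]; exact isMeagre_iUnion' (fun δ => hcon δ)
      have := isOpen_meagre_empty isOpen_univ hme
      exact (Set.univ_nonempty (α := ↥(lprod D) → Λ)).ne_empty this
    obtain ⟨γ, hγ⟩ := hex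
    set K := {b : ↥(lprod D) → Λ | c (SQ b) = γ} with hK
    obtain ⟨u, huo, hum⟩ := hBP γ
    have hune : u.Nonempty := by
      rcases Set.eq_empty_or_nonempty u with rfl | h
      · exfalso
        apply hγ
        refine hum.mono ?_
        intro b hb
        rw [Set.mem_symmDiff]
        exact Or.inl ⟨hb, fun h => h⟩
      · exact h
    -- the residual witness family
    obtain ⟨Sfam, hSopen, hSdense, hScnt, hSsub⟩ := mem_residual_iff.1 hum
    have hne' : (insert Set.univ Sfam).Nonempty := ⟨_, Set.mem_insert _ _⟩
    obtain ⟨Useq, hUseq⟩ := (hScnt.insert Set.univ).exists_eq_range hne'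
    have hUo : ∀ n, IsOpen (Useq n) ∧ Dense (Useq n) := by
      intro n
      have hmem : Useq n ∈ insert Set.univ Sfam := by rw [hUseq]; exact ⟨n, rfl⟩
      rcases Set.mem_insert_iff.1 hmem with h | h
      · rw [h]; exact ⟨isOpen_univ, dense_univ⟩
      · exact ⟨hSopen _ h, hSdense _ h⟩
    have hUsub : (⋂ n, Useq n) ⊆ (symmDiff K u)ᶜ := by
      intro b hb
      apply hSsub
      intro tS htS
      have hmem : tS ∈ insert Set.univ Sfam := Set.mem_insert_of_mem _ htS
      rw [hUseq] at hmem
      obtain ⟨n, rfl⟩ := hmem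
      exact mem_iInter.1 hb n
    -- a starting cylinder inside u
    obtain ⟨x₀, hx₀⟩ := hune
    obtain ⟨s₀, hs₀⟩ := exists_Cyl_subset huo hx₀
    -- fusion
    have hfin : ∀ n : ℕ, {i : ↥(lprod D) | lev i.1 = n}.Finite := by
      intro n
      have he : {i : ↥(lprod D) | lev i.1 = n} = Subtype.val ⁻¹' {t : LP V | lev t = n} := rfl
      rw [he]
      exact Set.Finite.preimage Subtype.val_injective.injOn (lp_level_finite V n)
    have hS₀inf : D.lvlSet.Infinite := Q.dense.1
    obtain ⟨S, g, hSsub₀, hSinf, hgf₀, hfus⟩ :=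
      fusion_main (lvl := fun i : ↥(lprod D) => lev i.1) hfin hS₀inf Useq
        (fun n => (hUo n).1) (fun n => (hUo n).2) s₀ x₀
    set gg : LP V → Λ := fun t => if h : t ∈ lprod D then g ⟨t, h⟩ else hΛ.some with hgg
    refine ⟨restrictSubspace Q S hSsub₀ hSinf gg,
      spanInf_restrictSubspace_subset Q S hSsub₀ hSinf gg, γ, ?_⟩
    rintro A ⟨a, rfl⟩
    set b : ↥(lprod D) → Λ := fun i => if lev i.1 ∈ S then a i.1 else g i with hb
    have hbg : ∀ i : ↥(lprod D), lev i.1 ∉ S → b i = g i := by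
      intro i hi; simp [hb, hi]
    obtain ⟨hbC, hbU⟩ := hfus b hbg
    have hbu : b ∈ u := hs₀ hbC
    have hbK : b ∈ K := by
      have h1 : b ∈ (symmDiff K u)ᶜ := hUsub (mem_iInter.2 hbU)
      by_contra h2
      exact h1 (Set.mem_symmDiff.2 (Or.inr ⟨hbu, h2⟩))
    have hA : (fun x => Sum.elim id a (restrictQfun Q S gg x)) = SQ b := by
      funext x
      rcases h : Q.Q x with v | t
      · rw [show restrictQfun Q S gg x = Sum.inl v by simp [restrictQfun, h]]
        simp [hSQ, h]
      · have htD : t ∈ lprod D := (Q.varIff t).1 ⟨x, h⟩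
        by_cases h2 : lev t ∈ S
        · rw [show restrictQfun Q S gg x = Sum.inr t by
            rw [restrictQfun_eq_inr]; exact ⟨h, h2⟩]
          simp [hSQ, h, hextb, htD, hb, h2]
        · rw [show restrictQfun Q S gg x = Sum.inl (gg t) by
            simp [restrictQfun, h, if_neg h2]]
          simp [hSQ, h, hextb, htD, hb, h2, hgg]
    show c (fun x => Sum.elim id a ((restrictSubspace Q S hSsub₀ hSinf gg).Q x)) = γ
    have hQ'eq : (fun x => Sum.elim id a ((restrictSubspace Q S hSsub₀ hSinf gg).Q x)) = SQ b := hA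
    rw [hQ'eq]
    exact hbK
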